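/- Let A be an r×c tropical matrix with full rank and connected bipartite graph B_A. If P, Q ∈ G_A both have 0 as their (unique) tropical eigenvalue, then PQ also has 0 as its unique eigenvalue. -/

import Mathlib

open scoped Classical

/-- The tropical (max-plus) semiring carrier: `ℝ ∪ {-∞}`, where `⊔` is tropical
addition (max) and `+` is tropical multiplication (with `⊥ = -∞` absorbing). -/
abbrev Trop : Type := WithBot ℝ

/-- Tropical matrix multiplication: `(A ⊗ B) i j = max_k (A i k + B k j)`. -/
def tmul {n m p : ℕ} (A : Fin n → Fin m → Trop) (B : Fin m → Fin p → Trop) :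
    Fin n → Fin p → Trop :=
  fun i j => Finset.univ.sup fun k => A i k + B k j

/-- Tropical matrix-vector multiplication (column vector on the right). -/
def tvmul {n m : ℕ} (A : Fin n → Fin m → Trop) (v : Fin m → Trop) : Fin n → Trop :=
  fun i => Finset.univ.sup fun k => A i k + v k

/-- Tropical vector-matrix multiplication (row vector on the left). -/
def vtmul {n m : ℕ} (v : Fin n → Trop) (A : Fin n → Fin m → Trop) : Fin m → Trop :=
  fun j => Finset.univ.sup fun k => v k + A k j

/-- The tropical identity matrix: `0` on the diagonal, `-∞` elsewhere. -/
def tId (n : ℕ) : Fin n → Fin n → Trop :=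
  fun i j => if i = j then ((0 : ℝ) : Trop) else ⊥

/-- A monomial matrix: exactly one entry different from `-∞` in each row and each column. -/
def IsMonomial {n : ℕ} (P : Fin n → Fin n → Trop) : Prop :=
  (∀ i, ∃! j, P i j ≠ ⊥) ∧ (∀ j, ∃! i, P i j ≠ ⊥)

/-- A `T`-subsemimodule of `T^n`: closed under tropical addition (max) and scaling. -/
def IsTropSubmodule {n : ℕ} (S : Set (Fin n → Trop)) : Prop :=
  (∀ x ∈ S, ∀ y ∈ S, x ⊔ y ∈ S) ∧
  (∀ c : Trop, ∀ x ∈ S, (fun i => c + x i) ∈ S)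

/-- The `T`-subsemimodule generated by a set of vectors. -/
def genBy {n : ℕ} (G : Set (Fin n → Trop)) : Set (Fin n → Trop) :=
  ⋂₀ {S | IsTropSubmodule S ∧ G ⊆ S}

/-- The column space of a tropical matrix. -/
def colSpace {n m : ℕ} (A : Fin n → Fin m → Trop) : Set (Fin n → Trop) :=
  genBy {v | ∃ j, v = fun i => A i j}

/-- The row space of a tropical matrix. -/
def rowSpace {n m : ℕ} (A : Fin n → Fin m → Trop) : Set (Fin m → Trop) :=
  genBy {v | ∃ i, v = fun j => A i j}

/-- The column rank: minimum cardinality of a generating set of the column space. -/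
noncomputable def colRank {n m : ℕ} (A : Fin n → Fin m → Trop) : ℕ :=
  sInf {k | ∃ G : Finset (Fin n → Trop), G.card = k ∧ genBy (↑G) = colSpace A}

/-- The row rank: minimum cardinality of a generating set of the row space. -/
noncomputable def rowRank {n m : ℕ} (A : Fin n → Fin m → Trop) : ℕ :=
  sInf {k | ∃ G : Finset (Fin m → Trop), G.card = k ∧ genBy (↑G) = rowSpace A}

/-- Isomorphism of tropical subsemimodules (given by a bijection preserving
tropical addition and scaling). -/
def TropIso {n m : ℕ} (S : Set (Fin n → Trop)) (S' : Set (Fin m → Trop)) : Prop :=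
  ∃ f : (Fin n → Trop) → (Fin m → Trop),
    Set.BijOn f S S' ∧
    (∀ x ∈ S, ∀ y ∈ S, f (x ⊔ y) = f x ⊔ f y) ∧
    (∀ c : Trop, ∀ x ∈ S, f (fun i => c + x i) = fun i => c + f x i)

/-- The `H`-class of a matrix `A` in `M(T)` (among matrices of the same shape),
characterised by equality of column and row spaces. -/
def HSet {n m : ℕ} (A : Fin n → Fin m → Trop) : Set (Fin n → Fin m → Trop) :=
  {B | colSpace B = colSpace A ∧ rowSpace B = rowSpace A}

/-- Adjacency of the coloured bipartite graph `B_A` of a tropical matrix. -/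
def BAdj {r c : ℕ} (A : Fin r → Fin c → Trop) :
    (Fin r ⊕ Fin c) → (Fin r ⊕ Fin c) → Prop
  | Sum.inl i, Sum.inr j => A i j ≠ ⊥
  | Sum.inr j, Sum.inl i => A i j ≠ ⊥
  | _, _ => False

/-- Connectedness of the bipartite graph `B_A`. -/
def BConnected {r c : ℕ} (A : Fin r → Fin c → Trop) : Prop :=
  ∀ x y : Fin r ⊕ Fin c, Relation.ReflTransGen (BAdj A) x y

/-- `lam` is a tropical eigenvalue of `P`. -/
def IsEig {n : ℕ} (P : Fin n → Fin n → Trop) (lam : Trop) : Prop :=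
  ∃ v : Fin n → Trop, v ≠ (fun _ => ⊥) ∧ tvmul P v = fun i => lam + v i

/-- The group `G_A` of monomial matrices `P` with `C(PA) = C(A)`. -/
def GA {r c : ℕ} (A : Fin r → Fin c → Trop) : Set (Fin r → Fin r → Trop) :=
  {P | IsMonomial P ∧ colSpace (tmul P A) = colSpace A}

/-- The dual group `{}_AG` of monomial matrices `Q` with `R(AQ) = R(A)`. -/
def AGr {r c : ℕ} (A : Fin r → Fin c → Trop) : Set (Fin c → Fin c → Trop) :=
  {Q | IsMonomial Q ∧ rowSpace (tmul A Q) = rowSpace A}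

lemma trop_add_sup (a b c : Trop) : a + (b ⊔ c) = (a+b) ⊔ (a+c) := by
  rcases le_total b c with h | h
  · simp [sup_eq_right.2 h, sup_eq_right.2 (add_le_add (le_refl a) h)]
  · simp [sup_eq_left.2 h, sup_eq_left.2 (add_le_add (le_refl a) h)]

lemma trop_sup_add (a b c : Trop) : (a ⊔ b) + c = (a+c) ⊔ (b+c) := by
  rcases le_total a b with h | h
  · simp [sup_eq_right.2 h, sup_eq_right.2 (add_le_add h (le_refl c))]
  · simp [sup_eq_left.2 h, sup_eq_left.2 (add_le_add h (le_refl c))]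

lemma trop_add_finsetsup {ι} (s : Finset ι) (a : Trop) (f : ι → Trop) :
    a + s.sup f = s.sup fun k => a + f k := by
  induction s using Finset.induction with
  | empty => simp
  | insert _ _ h ih => rw [Finset.sup_insert, Finset.sup_insert, trop_add_sup, ih]

lemma subset_genBy {n} (G : Set (Fin n → Trop)) : G ⊆ genBy G := by
  intro x hx S hS; exact hS.2 hx

lemma genBy_le {n} {G S : Set (Fin n → Trop)} (hS : IsTropSubmodule S) (h : G ⊆ S) :
    genBy G ⊆ S := Set.sInter_subset_of_mem ⟨hS, h⟩

lemma genBy_submodule {n} (G : Set (Fin n → Trop)) : IsTropSubmodule (genBy G) := by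
  constructor
  · intro x hx y hy S hS; exact hS.1.1 x (hx S hS) y (hy S hS)
  · intro c x hx S hS; exact hS.1.2 c x (hx S hS)

lemma comb_mem {n ι} {S : Set (Fin n → Trop)} (hS : IsTropSubmodule S)
    (s : Finset ι) (hs : s.Nonempty) (f : ι → Fin n → Trop) (hf : ∀ k ∈ s, f k ∈ S)
    (d : ι → Trop) : (fun i => s.sup fun k => d k + f k i) ∈ S := by
  induction hs using Finset.Nonempty.cons_induction with
  | singleton a => simpa using hS.2 (d a) (f a) (hf a (by simp))
  | cons a s ha hs ih =>
      have : (fun i => (Finset.cons a s ha).sup fun k => d k + f k i)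
          = (fun i => d a + f a i) ⊔ (fun i => s.sup fun k => d k + f k i) := by
        funext i; simp [Finset.sup_cons]
      rw [this]
      exact hS.1 _ (hS.2 (d a) (f a) (hf a (by simp)))
        _ (ih fun k hk => hf k (Finset.mem_cons_of_mem hk))

lemma comb_char {n : ℕ} {ι} [Fintype ι] [Nonempty ι] (f : ι → Fin n → Trop) :
    genBy {v | ∃ j, v = f j}
      = {v | ∃ d : ι → Trop, v = fun i => Finset.univ.sup fun k => d k + f k i} := by
  apply le_antisymm
  · apply genBy_le
    · constructor
      · rintro x ⟨d, rfl⟩ y ⟨e, rfl⟩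
        refine ⟨d ⊔ e, ?_⟩
        funext i
        rw [Pi.sup_apply, ← Finset.sup_sup]
        apply Finset.sup_congr rfl
        intro k _
        show (d k + f k i) ⊔ (e k + f k i) = (d k ⊔ e k) + f k i
        rw [trop_sup_add]
      · rintro c x ⟨d, rfl⟩
        refine ⟨fun k => c + d k, ?_⟩
        funext i
        rw [trop_add_finsetsup]
        congr 1; ext k; rw [add_assoc]
    · rintro v ⟨j, rfl⟩
      refine ⟨fun k => if k = j then ((0:ℝ):Trop) else ⊥, ?_⟩
      funext i
      apply le_antisymm
      · have := Finset.le_sup (f := fun k => (if k = j then ((0:ℝ):Trop) else ⊥) + f k i)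
          (Finset.mem_univ j)
        simpa using this
      · apply Finset.sup_le
        intro k _
        by_cases h : k = j <;> simp [h]
  · rintro v ⟨d, rfl⟩
    exact comb_mem (genBy_submodule _) _ Finset.univ_nonempty _
      (fun k _ => subset_genBy _ (show ∃ j, f k = f j from ⟨k, rfl⟩)) d

def TRepr {n : ℕ} (P : Fin n → Fin n → Trop) (σ : Equiv.Perm (Fin n)) (p : Fin n → ℝ) : Prop :=
  ∀ i m, P i m = if m = σ i then ((p i : ℝ) : Trop) else ⊥

lemma sup_eq_single {n : ℕ} (f : Fin n → Trop) (k₀ : Fin n)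
    (h : ∀ k, k ≠ k₀ → f k = ⊥) : Finset.univ.sup f = f k₀ := by
  apply le_antisymm
  · apply Finset.sup_le
    intro k _
    by_cases hk : k = k₀
    · subst hk; exact le_rfl
    · rw [h k hk]; exact bot_le
  · exact Finset.le_sup (Finset.mem_univ k₀)

lemma monomial_repr {n : ℕ} {P : Fin n → Fin n → Trop} (hP : IsMonomial P) :
    ∃ (σ : Equiv.Perm (Fin n)) (p : Fin n → ℝ), TRepr P σ p := by
  choose σ0 h1 h2 using hP.1
  have hinj : Function.Injective σ0 := by
    intro i i' h
    obtain ⟨w, hw, hwu⟩ := hP.2 (σ0 i)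
    have e1 := hwu i (h1 i)
    have e2 := hwu i' (by rw [h]; exact h1 i')
    exact e1.trans e2.symm
  have hbij : Function.Bijective σ0 := (Finite.injective_iff_bijective).1 hinj
  refine ⟨Equiv.ofBijective σ0 hbij, fun i => (P i (σ0 i)).unbotD 0, ?_⟩
  intro i m
  by_cases hm : m = σ0 i
  · subst hm
    simp only [Equiv.ofBijective_apply, if_pos rfl]
    obtain ⟨a, ha⟩ := WithBot.ne_bot_iff_exists.1 (h1 i)
    rw [← ha]; simp [WithBot.unbotD]
  · simp only [Equiv.ofBijective_apply, if_neg hm]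
    by_contra hne
    exact hm (h2 i m hne)

lemma repr_tvmul {n : ℕ} {P : Fin n → Fin n → Trop} {σ : Equiv.Perm (Fin n)} {p : Fin n → ℝ}
    (h : TRepr P σ p) (v : Fin n → Trop) (i : Fin n) :
    tvmul P v i = ((p i : ℝ) : Trop) + v (σ i) := by
  unfold tvmul
  have := sup_eq_single (fun k => P i k + v k) (σ i) ?_
  · rw [this, h i (σ i), if_pos rfl]
  · intro k hk
    simp only [h i k, if_neg hk, WithBot.bot_add]

lemma repr_tmul_entry {n m : ℕ} {P : Fin n → Fin n → Trop} {σ : Equiv.Perm (Fin n)}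
    {p : Fin n → ℝ} (h : TRepr P σ p) (A : Fin n → Fin m → Trop) (i : Fin n) (k : Fin m) :
    tmul P A i k = ((p i : ℝ) : Trop) + A (σ i) k := by
  unfold tmul
  have := sup_eq_single (fun l => P i l + A l k) (σ i) ?_
  · rw [this, h i (σ i), if_pos rfl]
  · intro l hl
    simp only [h i l, if_neg hl, WithBot.bot_add]

lemma repr_mul {n : ℕ} {P Q : Fin n → Fin n → Trop} {σ τ : Equiv.Perm (Fin n)}
    {p q : Fin n → ℝ} (hp : TRepr P σ p) (hq : TRepr Q τ q) :
    TRepr (tmul P Q) (σ.trans τ) (fun i => p i + q (σ i)) := by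
  intro i m
  rw [repr_tmul_entry hp Q i m, hq (σ i) m]
  by_cases hm : m = τ (σ i)
  · simp [hm, Equiv.trans_apply]
  · simp [hm, Equiv.trans_apply]

def ARel {r c : ℕ} (A : Fin r → Fin c → Trop) (p : Fin r → ℝ) (σ : Equiv.Perm (Fin r))
    (μ : Fin c → ℝ) (π : Equiv.Perm (Fin c)) : Prop :=
  ∀ i k, ((p i : ℝ) : Trop) + A (σ i) k = ((μ k : ℝ) : Trop) + A i (π k)

lemma arel_comp {r c : ℕ} {A : Fin r → Fin c → Trop} {p p' : Fin r → ℝ}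
    {σ σ' : Equiv.Perm (Fin r)} {μ μ' : Fin c → ℝ} {π π' : Equiv.Perm (Fin c)}
    (h : ARel A p σ μ π) (h' : ARel A p' σ' μ' π') :
    ARel A (fun i => p' i + p (σ' i)) (σ'.trans σ) (fun k => μ k + μ' (π k)) (π.trans π') := by
  intro i k
  have e1 := h (σ' i) k
  have e2 := h' i (π k)
  simp only [Equiv.trans_apply]
  push_cast
  calc (↑(p' i) + ↑(p (σ' i)) : Trop) + A (σ (σ' i)) k
      = ↑(p' i) + (↑(p (σ' i)) + A (σ (σ' i)) k) := by rw [add_assoc]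
    _ = ↑(p' i) + (↑(μ k) + A (σ' i) (π k)) := by rw [e1]
    _ = ↑(μ k) + (↑(p' i) + A (σ' i) (π k)) := by
        rw [← add_assoc, ← add_assoc, add_comm (↑(p' i) : Trop) (↑(μ k) : Trop)]
    _ = ↑(μ k) + (↑(μ' (π k)) + A i (π' (π k))) := by rw [e2]
    _ = ↑(μ k) + ↑(μ' (π k)) + A i (π' (π k)) := by rw [add_assoc]

lemma arel_pow {r c : ℕ} {A : Fin r → Fin c → Trop} {p : Fin r → ℝ}
    {σ : Equiv.Perm (Fin r)} {μ : Fin c → ℝ} {π : Equiv.Perm (Fin c)}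
    (h : ARel A p σ μ π) (n : ℕ) :
    ∃ ν : Fin c → ℝ, ARel A (fun i => ∑ t ∈ Finset.range n, p ((σ ^ t) i)) (σ ^ n) ν (π ^ n) := by
  induction n with
  | zero => exact ⟨fun _ => 0, fun i k => by simp⟩
  | succ n ih =>
      obtain ⟨ν, hν⟩ := ih
      have key := arel_comp hν h
      have hσ : σ.trans (σ ^ n) = σ ^ (n + 1) := by
        ext x; simp [Equiv.trans_apply, pow_succ, Equiv.Perm.mul_apply]
      have hπ : (π ^ n).trans π = π ^ (n + 1) := by
        ext x; simp [Equiv.trans_apply, pow_succ', Equiv.Perm.mul_apply]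
      have hp : (fun i => p i + ∑ t ∈ Finset.range n, p ((σ ^ t) (σ i)))
          = fun i => ∑ t ∈ Finset.range (n+1), p ((σ ^ t) i) := by
        funext i
        rw [Finset.sum_range_succ']
        simp only [pow_zero, Equiv.Perm.one_apply, pow_succ, Equiv.Perm.mul_apply]
        ring
      rw [hσ, hπ, hp] at key
      exact ⟨_, key⟩

lemma cycle_shift {n : ℕ} {σ : Equiv.Perm (Fin n)} {p : Fin n → ℝ} {N : ℕ}
    (hσ : σ ^ N = 1) {C : ℝ} (hC : ∀ i, ∑ t ∈ Finset.range N, p ((σ ^ t) i) = C) (i : Fin n) :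
    (∑ t ∈ Finset.range N, (t : ℝ) * p ((σ ^ t) (σ i)))
      = (∑ t ∈ Finset.range N, (t : ℝ) * p ((σ ^ t) i)) + N * p i - C := by
  set q : ℕ → ℝ := fun s => p ((σ ^ s) i) with hq
  have hqN : q N = p i := by simp [hq, hσ]
  have hshift : ∀ t, p ((σ ^ t) (σ i)) = q (t + 1) := by
    intro t
    simp [hq, pow_succ, Equiv.Perm.mul_apply]
  have h1 : ∑ t ∈ Finset.range (N + 1), (t : ℝ) * q t
      = ∑ t ∈ Finset.range N, ((t : ℝ) + 1) * q (t + 1) + 0 * q 0 := by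
    rw [Finset.sum_range_succ']
    push_cast
    ring_nf
  have h2 : ∑ t ∈ Finset.range (N + 1), (t : ℝ) * q t
      = ∑ t ∈ Finset.range N, (t : ℝ) * q t + N * q N := Finset.sum_range_succ _ _
  have h3 : ∑ t ∈ Finset.range (N + 1), q t = ∑ t ∈ Finset.range N, q (t + 1) + q 0 :=
    Finset.sum_range_succ' _ _
  have h4 : ∑ t ∈ Finset.range (N + 1), q t = ∑ t ∈ Finset.range N, q t + q N :=
    Finset.sum_range_succ _ _
  have hCq : ∑ t ∈ Finset.range N, q t = C := hC i
  have hq0 : q 0 = p i := by simp [hq]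
  have hsum : ∑ t ∈ Finset.range N, q (t + 1) = C := by
    have := h3.symm.trans h4
    rw [hCq, hqN, hq0] at this
    linarith
  have hexp : ∑ t ∈ Finset.range N, ((t : ℝ) + 1) * q (t + 1)
      = ∑ t ∈ Finset.range N, (t : ℝ) * q (t + 1) + ∑ t ∈ Finset.range N, q (t + 1) := by
    rw [← Finset.sum_add_distrib]
    congr 1; funext t; ring
  calc ∑ t ∈ Finset.range N, (t : ℝ) * p ((σ ^ t) (σ i))
      = ∑ t ∈ Finset.range N, (t : ℝ) * q (t + 1) := by
        apply Finset.sum_congr rfl; intro t _; rw [hshift t]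
    _ = (∑ t ∈ Finset.range N, (t : ℝ) * q t) + N * p i - C := by
        have := h1.symm.trans h2
        rw [hexp, hsum, hqN] at this
        linarith
    _ = (∑ t ∈ Finset.range N, (t : ℝ) * p ((σ ^ t) i)) + N * p i - C := rfl

lemma eig_exists {n : ℕ} (hn : 0 < n) {P : Fin n → Fin n → Trop} {σ : Equiv.Perm (Fin n)}
    {p : Fin n → ℝ} (hrepr : TRepr P σ p) {N : ℕ} (hN : N ≠ 0) (hσ : σ ^ N = 1)
    {C : ℝ} (hC : ∀ i, ∑ t ∈ Finset.range N, p ((σ ^ t) i) = C) :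
    IsEig P ((C / N : ℝ) : Trop) := by
  set g : Fin n → ℝ := fun i => -(∑ t ∈ Finset.range N, (t : ℝ) * p ((σ ^ t) i)) / N with hg
  refine ⟨fun i => ((g i : ℝ) : Trop), ?_, ?_⟩
  · intro h
    have := congrFun h ⟨0, hn⟩
    simp at this
  · funext i
    rw [repr_tvmul hrepr]
    rw [← WithBot.coe_add, ← WithBot.coe_add]
    congr 1
    have key := cycle_shift hσ hC i
    have hNpos : (0 : ℝ) < N := by positivity
    simp only [hg]
    field_simp
    linarith
lemma eig_unique {n : ℕ} {P : Fin n → Fin n → Trop} {σ : Equiv.Perm (Fin n)}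
    {p : Fin n → ℝ} (hrepr : TRepr P σ p) {N : ℕ} (hN : N ≠ 0) (hσ : σ ^ N = 1)
    {C : ℝ} (hC : ∀ i, ∑ t ∈ Finset.range N, p ((σ ^ t) i) = C) :
    ∀ mu : Trop, IsEig P mu → mu = ((C / N : ℝ) : Trop) := by
  rintro mu ⟨v, hv0, hveq⟩
  have heq : ∀ i, ((p i : ℝ) : Trop) + v (σ i) = mu + v i := by
    intro i
    have := congrFun hveq i
    rw [repr_tvmul hrepr] at this
    exact this
  obtain ⟨i₀, hi₀⟩ : ∃ i, v i ≠ ⊥ := by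
    by_contra h
    push_neg at h
    exact hv0 (funext fun i => h i)
  induction mu using WithBot.recBotCoe with
  | bot =>
      exfalso
      apply hi₀
      have := heq (σ.symm i₀)
      rw [Equiv.apply_symm_apply] at this
      simp only [WithBot.bot_add] at this
      exact (WithBot.add_eq_bot.1 this).resolve_left (by simp)
  | coe m =>
      have key : ∀ t : ℕ, ((∑ s ∈ Finset.range t, p ((σ ^ s) i₀) : ℝ) : Trop) + v ((σ ^ t) i₀)
          = ((t * m : ℝ) : Trop) + v i₀ := by
        intro t
        induction t with
        | zero => simp
        | succ t ih =>
            have hstep : (σ ^ (t + 1)) i₀ = σ ((σ ^ t) i₀) := by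
              rw [pow_succ']; rfl
            rw [Finset.sum_range_succ, hstep]
            calc ((∑ s ∈ Finset.range t, p ((σ ^ s) i₀) + p ((σ ^ t) i₀) : ℝ) : Trop)
                  + v (σ ((σ ^ t) i₀))
                = ((∑ s ∈ Finset.range t, p ((σ ^ s) i₀) : ℝ) : Trop)
                  + (((p ((σ ^ t) i₀) : ℝ) : Trop) + v (σ ((σ ^ t) i₀))) := by
                  rw [← add_assoc, ← WithBot.coe_add]
              _ = ((∑ s ∈ Finset.range t, p ((σ ^ s) i₀) : ℝ) : Trop)
                  + (((m : ℝ) : Trop) + v ((σ ^ t) i₀)) := by rw [heq ((σ ^ t) i₀)]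
              _ = ((m : ℝ) : Trop)
                  + (((∑ s ∈ Finset.range t, p ((σ ^ s) i₀) : ℝ) : Trop) + v ((σ ^ t) i₀)) := by
                  rw [← add_assoc, ← add_assoc, add_comm (((∑ s ∈ Finset.range t, p ((σ ^ s) i₀) : ℝ) : Trop)) ((m : ℝ) : Trop)]
              _ = ((m : ℝ) : Trop) + (((t * m : ℝ) : Trop) + v i₀) := by rw [ih]
              _ = (((t + 1 : ℕ) * m : ℝ) : Trop) + v i₀ := by
                  rw [← add_assoc, ← WithBot.coe_add]
                  have harith : m + (t : ℝ) * m = ((t + 1 : ℕ) : ℝ) * m := by push_cast; ring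
                  rw [harith]
      have hNkey := key N
      rw [hC i₀, hσ] at hNkey
      simp only [Equiv.Perm.one_apply] at hNkey
      obtain ⟨a, ha⟩ := WithBot.ne_bot_iff_exists.1 hi₀
      rw [← ha, ← WithBot.coe_add, ← WithBot.coe_add] at hNkey
      have : C + a = N * m + a := WithBot.coe_inj.1 hNkey
      have hm : m = C / N := by
        have hNpos : (0 : ℝ) < N := by positivity
        field_simp
        linarith
      rw [hm]

lemma trop_finsetsup_add {ι} (s : Finset ι) (a : Trop) (f : ι → Trop) :
    s.sup f + a = s.sup fun k => f k + a := by
  induction s using Finset.cons_induction with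
  | empty => simp [WithBot.bot_add]
  | cons x s hx ih => rw [Finset.sup_cons, Finset.sup_cons, trop_sup_add, ih]

lemma sup_split {n : ℕ} (f : Fin n → Trop) (j : Fin n) :
    Finset.univ.sup f = f j ⊔ (Finset.univ.erase j).sup f := by
  conv_lhs => rw [← Finset.insert_erase (Finset.mem_univ j)]
  rw [Finset.sup_insert]

section Structural
variable {r c : ℕ} {A : Fin r → Fin c → Trop}

lemma col_mem_colSpace (j : Fin c) : (fun i => A i j) ∈ colSpace A :=
  subset_genBy _ ⟨j, rfl⟩

lemma colSpace_submodule : IsTropSubmodule (colSpace A) := genBy_submodule _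

lemma colSpace_eq_comb [Nonempty (Fin c)] :
    colSpace A = {v | ∃ d : Fin c → Trop, v = fun i => Finset.univ.sup fun k => d k + A i k} :=
  comb_char (fun j => fun i => A i j)

lemma colRank_le (G : Finset (Fin r → Trop)) (h : genBy (↑G) = colSpace A) :
    colRank A ≤ G.card := Nat.sInf_le ⟨G, rfl, h⟩

variable (hcol : colRank A = c)

lemma gen_cols : genBy ↑(Finset.univ.image fun j => fun i => A i j) = colSpace A := by
  unfold colSpace
  have hset : (↑(Finset.univ.image fun j => fun i => A i j) : Set (Fin r → Trop))
      = {v | ∃ j, v = fun i => A i j} := by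
    ext v
    simp only [Finset.coe_image, Finset.coe_univ, Set.image_univ, Set.mem_range,
      Set.mem_setOf_eq]
    exact ⟨fun ⟨j, h⟩ => ⟨j, h.symm⟩, fun ⟨j, h⟩ => ⟨j, h.symm⟩⟩
  rw [hset]

include hcol in
lemma cols_card : (Finset.univ.image fun j => fun i => A i j).card = c := by
  apply le_antisymm
  · exact le_trans (Finset.card_image_le) (by simp)
  · exact le_of_eq_of_le hcol.symm (colRank_le _ gen_cols)

include hcol in
lemma col_inj : Function.Injective (fun j => fun i => A i j : Fin c → Fin r → Trop) := by
  have h := cols_card hcol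
  have h2 : (Finset.univ.image fun j => fun i => A i j).card
      = (Finset.univ : Finset (Fin c)).card := by rw [h]; simp
  have := Finset.card_image_iff.1 h2
  intro a b hab
  exact this (Finset.mem_univ a) (Finset.mem_univ b) hab

include hcol in
lemma col_notin_erase (j : Fin c) :
    (fun i => A i j) ∉
      genBy ↑((Finset.univ.image fun j => fun i => A i j).erase (fun i => A i j)) := by
  intro hmem
  set Cols := (Finset.univ.image fun j => fun i => A i j) with hCols
  set D : Set (Fin r → Trop) := ↑(Cols.erase fun i => A i j) with hD
  have hsub : IsTropSubmodule (genBy D) := genBy_submodule _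
  have hgens : {v : Fin r → Trop | ∃ j', v = fun i => A i j'} ⊆ genBy D := by
    rintro v ⟨j', rfl⟩
    by_cases hj : (fun i => A i j') = fun i => A i j
    · rw [hj]; exact hmem
    · exact subset_genBy _ (Finset.mem_coe.2 (Finset.mem_erase.2 ⟨hj,
        Finset.mem_image.2 ⟨j', Finset.mem_univ _, rfl⟩⟩))
  have hup : colSpace A ⊆ genBy D := genBy_le hsub hgens
  have hdown : genBy D ⊆ colSpace A := by
    apply genBy_le colSpace_submodule
    intro v hv
    have := Finset.mem_of_mem_erase (Finset.mem_coe.1 hv)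
    obtain ⟨j', _, rfl⟩ := Finset.mem_image.1 this
    exact col_mem_colSpace j'
  have heq : genBy D = colSpace A := le_antisymm hdown hup
  have hle := colRank_le (Cols.erase fun i => A i j) heq
  rw [hcol, Finset.card_erase_of_mem (Finset.mem_image.2 ⟨j, Finset.mem_univ _, rfl⟩),
    cols_card hcol] at hle
  have : 0 < c := j.pos
  omega

lemma col_has_finite (hconn : BConnected A) (hr : 0 < r) (j : Fin c) :
    ∃ i, A i j ≠ ⊥ := by
  have hpath := hconn (Sum.inr j) (Sum.inl ⟨0, hr⟩)
  rcases Relation.ReflTransGen.cases_head hpath with h | ⟨b, hb, _⟩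
  · exact absurd h (by simp)
  · cases b with
    | inl i => exact ⟨i, hb⟩
    | inr j' => exact absurd hb (by simp [BAdj])

lemma trop_add_lt_coe {x : Trop} {t b : ℝ} (h : x < (t : Trop)) :
    x + (b : Trop) < ((t + b : ℝ) : Trop) := by
  induction x using WithBot.recBotCoe with
  | bot => rw [WithBot.bot_add]; exact WithBot.bot_lt_coe _
  | coe y =>
      rw [← WithBot.coe_add]
      exact WithBot.coe_lt_coe.2 (by have := WithBot.coe_lt_coe.1 h; linarith)

include hcol in
lemma key_column (hconn : BConnected A) (hr : 0 < r) [Nonempty (Fin c)]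
    {P : Fin r → Fin r → Trop} (hPA : colSpace (tmul P A) = colSpace A) (j : Fin c) :
    ∃ (k : Fin c) (dk : ℝ), ∀ i, A i j = ((dk : ℝ) : Trop) + tmul P A i k := by
  have h1 : (fun i => A i j) ∈ colSpace (tmul P A) := by
    rw [hPA]; exact col_mem_colSpace j
  rw [colSpace_eq_comb] at h1
  obtain ⟨d, hd⟩ := h1
  have h2 : ∀ k, ∃ e : Fin c → Trop,
      (fun i => tmul P A i k) = fun i => Finset.univ.sup fun m => e m + A i m := by
    intro k
    have : (fun i => tmul P A i k) ∈ colSpace A := by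
      rw [← hPA]; exact col_mem_colSpace k
    rw [colSpace_eq_comb] at this
    exact this
  choose e he using h2
  have hdi : ∀ i, A i j = Finset.univ.sup fun k => d k + tmul P A i k :=
    fun i => congrFun hd i
  have hei : ∀ k i, tmul P A i k = Finset.univ.sup fun m => e k m + A i m :=
    fun k i => congrFun (he k) i
  set E : Fin c → Trop := fun m => Finset.univ.sup fun k => d k + e k m with hE
  have hcolj : ∀ i, A i j = Finset.univ.sup fun m => E m + A i m := by
    intro i
    rw [hdi i]
    calc Finset.univ.sup (fun k => d k + tmul P A i k)
        = Finset.univ.sup fun k => Finset.univ.sup fun m => d k + (e k m + A i m) := by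
          apply Finset.sup_congr rfl; intro k _
          rw [hei k i, trop_add_finsetsup]
      _ = Finset.univ.sup fun m => Finset.univ.sup fun k => d k + (e k m + A i m) :=
          Finset.sup_comm _ _ _
      _ = Finset.univ.sup fun m => E m + A i m := by
          apply Finset.sup_congr rfl; intro m _
          rw [hE, trop_finsetsup_add]
          apply Finset.sup_congr rfl; intro k _
          rw [add_assoc]
  obtain ⟨i₀, hi₀⟩ := col_has_finite hconn hr j
  obtain ⟨a, ha⟩ := WithBot.ne_bot_iff_exists.1 hi₀
  have hterm : ∀ i m, E m + A i m ≤ A i j := by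
    intro i m
    have := Finset.le_sup (f := fun m => E m + A i m) (Finset.mem_univ m)
    rw [← hcolj i] at this
    exact this
  have hEj_le : E j ≤ ((0 : ℝ) : Trop) := by
    have h := hterm i₀ j
    rw [← ha] at h
    obtain hEb | ⟨x, hx⟩ := (eq_or_ne (E j) ⊥).imp id WithBot.ne_bot_iff_exists.1
    · rw [hEb]; exact bot_le
    · rw [← hx] at h ⊢
      rw [← WithBot.coe_add] at h
      exact WithBot.coe_le_coe.2 (by have := WithBot.coe_le_coe.1 h; linarith)
  have hEj_eq : E j = ((0 : ℝ) : Trop) := by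
    rcases lt_or_eq_of_le hEj_le with hlt | heq
    · exfalso
      set Z : Fin r → Trop := fun i => (Finset.univ.erase j).sup fun m => E m + A i m with hZ
      have hZeq : ∀ i, A i j = (E j + A i j) ⊔ Z i := by
        intro i
        conv_lhs => rw [hcolj i, sup_split (fun m => E m + A i m) j]
      have hZcol : ∀ i, Z i = A i j := by
        intro i
        obtain hib | ⟨b, hb⟩ := (eq_or_ne (A i j) ⊥).imp id WithBot.ne_bot_iff_exists.1
        · have h := hZeq i
          rw [hib] at h
          have : Z i ≤ ⊥ := le_of_le_of_eq le_sup_right h.symm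
          rw [hib]
          exact le_bot_iff.1 this
        · have hlt2 : E j + A i j < A i j := by
            rw [← hb]
            have := trop_add_lt_coe (b := b) hlt
            rw [zero_add] at this
            exact this
          have h := hZeq i
          rcases le_total (E j + A i j) (Z i) with hle | hle
          · rw [sup_eq_right.2 hle] at h; exact h.symm
          · rw [sup_eq_left.2 hle] at h; exact absurd h.symm (ne_of_lt hlt2)
      rcases Finset.eq_empty_or_nonempty (Finset.univ.erase j) with hemp | hne
      · have h : (⊥ : Trop) = A i₀ j := by
          rw [← hZcol i₀, hZ]; simp [hemp]
        rw [← ha] at h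
        simp at h
      · apply col_notin_erase hcol j
        have hZmem : (fun i => (Finset.univ.erase j).sup fun m => E m + (fun i' => A i' m) i) ∈
            genBy ↑((Finset.univ.image fun j => fun i => A i j).erase (fun i => A i j)) := by
          apply comb_mem (genBy_submodule _) _ hne
          intro m hm
          apply subset_genBy
          refine Finset.mem_coe.2 (Finset.mem_erase.2 ⟨?_,
            Finset.mem_image.2 ⟨m, Finset.mem_univ _, rfl⟩⟩)
          intro hcontra
          exact (Finset.mem_erase.1 hm).1 (col_inj hcol hcontra)
        have hfun : (fun i => A i j)
            = fun i => (Finset.univ.erase j).sup fun m => E m + (fun i' => A i' m) i := by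
          funext i
          rw [← hZcol i]
        exact Set.mem_of_eq_of_mem hfun hZmem
    · exact heq
  obtain ⟨k₀, _, hk₀⟩ := Finset.exists_mem_eq_sup Finset.univ Finset.univ_nonempty
    (fun k => d k + e k j)
  have h0 : d k₀ + e k₀ j = ((0 : ℝ) : Trop) := by
    rw [← hk₀]
    exact hEj_eq
  have hdk : d k₀ ≠ ⊥ := by
    intro h; rw [h, WithBot.bot_add] at h0; exact absurd h0 (by simp)
  have hek : e k₀ j ≠ ⊥ := by
    intro h; rw [h, WithBot.add_bot] at h0; exact absurd h0 (by simp)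
  obtain ⟨dk, hdkv⟩ := WithBot.ne_bot_iff_exists.1 hdk
  obtain ⟨ej, hejv⟩ := WithBot.ne_bot_iff_exists.1 hek
  have hsum0 : dk + ej = 0 := by
    rw [← hdkv, ← hejv, ← WithBot.coe_add] at h0
    exact WithBot.coe_inj.1 h0
  refine ⟨k₀, dk, fun i => ?_⟩
  apply le_antisymm
  · have ht : e k₀ j + A i j ≤ tmul P A i k₀ := by
      have := Finset.le_sup (f := fun m => e k₀ m + A i m) (Finset.mem_univ j)
      rw [← hei k₀ i] at this
      exact this
    calc A i j = ((dk + ej : ℝ) : Trop) + A i j := by rw [hsum0]; simp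
      _ = (dk : Trop) + ((ej : Trop) + A i j) := by
          rw [WithBot.coe_add, add_assoc]
      _ ≤ (dk : Trop) + tmul P A i k₀ := by
          rw [← hejv] at ht
          exact add_le_add (le_refl _) ht
  · have h := Finset.le_sup (f := fun k => d k + tmul P A i k) (Finset.mem_univ k₀)
    rw [← hdi i] at h
    rw [hdkv]
    exact h

include hcol in
lemma exists_arel (hconn : BConnected A) (hr : 0 < r)
    {P : Fin r → Fin r → Trop} {σ : Equiv.Perm (Fin r)} {p : Fin r → ℝ}
    (hPA : colSpace (tmul P A) = colSpace A) (hrepr : TRepr P σ p) :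
    ∃ (μ : Fin c → ℝ) (π : Equiv.Perm (Fin c)), ARel A p σ μ π := by
  rcases Nat.eq_zero_or_pos c with hc0 | hcpos
  · exact ⟨fun _ => 0, 1, fun i k => absurd k.isLt (by omega)⟩
  haveI : Nonempty (Fin c) := Fin.pos_iff_nonempty.1 hcpos
  choose τ δ hτ using fun j => key_column hcol hconn hr hPA j
  have hτ' : ∀ j i, A i j = ((δ j + p i : ℝ) : Trop) + A (σ i) (τ j) := by
    intro j i
    rw [hτ j i, repr_tmul_entry hrepr, ← add_assoc, ← WithBot.coe_add]
  have hinj : Function.Injective τ := by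
    intro j j' hjj
    by_contra hne
    have hprop : ∀ i, A i j = ((δ j - δ j' : ℝ) : Trop) + A i j' := by
      intro i
      rw [hτ' j i, hτ' j' i, hjj, ← add_assoc, ← WithBot.coe_add,
        show δ j - δ j' + (δ j' + p i) = δ j + p i by ring]
    have hcols_ne : (fun i => A i j') ≠ (fun i => A i j) := by
      intro h
      exact hne (col_inj hcol h).symm
    apply col_notin_erase hcol j
    set D : Set (Fin r → Trop) :=
      ↑((Finset.univ.image fun j => fun i => A i j).erase (fun i => A i j)) with hD
    have hmem : (fun i => A i j') ∈ genBy D :=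
      subset_genBy _ (Finset.mem_coe.2 (Finset.mem_erase.2 ⟨hcols_ne,
        Finset.mem_image.2 ⟨j', Finset.mem_univ _, rfl⟩⟩))
    have hsc := (genBy_submodule D).2 ((δ j - δ j' : ℝ) : Trop) _ hmem
    have hfun : (fun i => A i j) = fun i => ((δ j - δ j' : ℝ) : Trop) + A i j' :=
      funext hprop
    exact Set.mem_of_eq_of_mem hfun hsc
  have hbij := Finite.injective_iff_bijective.1 hinj
  set πe := Equiv.ofBijective τ hbij with hπe
  refine ⟨fun k => -(δ (πe.symm k)), πe.symm, fun i k => ?_⟩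
  have hτk : τ (πe.symm k) = k := πe.apply_symm_apply k
  have h := hτ' (πe.symm k) i
  rw [hτk] at h
  show ((p i : ℝ) : Trop) + A (σ i) k = ((-(δ (πe.symm k)) : ℝ) : Trop) + A i (πe.symm k)
  rw [h, ← add_assoc, ← WithBot.coe_add,
    show -δ (πe.symm k) + (δ (πe.symm k) + p i) = p i by ring]
end Structural

lemma conn_const {r c : ℕ} {A : Fin r → Fin c → Trop} (hconn : BConnected A)
    {f : Fin r → ℝ} {g : Fin c → ℝ}
    (hedge : ∀ i k, A i k ≠ ⊥ → f i = g k) (i i' : Fin r) : f i = f i' := by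
  have hstep : ∀ x y, BAdj A x y → Sum.elim f g x = Sum.elim f g y := by
    intro x y hxy
    cases x with
    | inl a =>
        cases y with
        | inl b => exact hxy.elim
        | inr b => exact hedge a b hxy
    | inr a =>
        cases y with
        | inl b => exact (hedge b a hxy).symm
        | inr b => exact hxy.elim
  have hgen : ∀ x y, Relation.ReflTransGen (BAdj A) x y → Sum.elim f g x = Sum.elim f g y := by
    intro x y h
    induction h with
    | refl => rfl
    | tail _ h2 ih => exact ih.trans (hstep _ _ h2)
  exact hgen _ _ (hconn (Sum.inl i) (Sum.inl i'))

lemma package {r c : ℕ} {A : Fin r → Fin c → Trop} (hconn : BConnected A) (hr : 0 < r)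
    {σ : Equiv.Perm (Fin r)} {p : Fin r → ℝ} {μ : Fin c → ℝ} {π : Equiv.Perm (Fin c)}
    (hrel : ARel A p σ μ π) :
    ∃ (N : ℕ) (C : ℝ), N ≠ 0 ∧ σ ^ N = 1 ∧
      (∀ i, ∑ t ∈ Finset.range N, p ((σ ^ t) i) = C) ∧
      (r : ℝ) * C = N * ∑ i, p i := by
  set N := orderOf σ * orderOf π with hN
  have hNne : N ≠ 0 := Nat.mul_ne_zero (orderOf_pos σ).ne' (orderOf_pos π).ne'
  have hσN : σ ^ N = 1 := by rw [hN, pow_mul, pow_orderOf_eq_one, one_pow]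
  have hπN : π ^ N = 1 := by rw [hN, mul_comm, pow_mul, pow_orderOf_eq_one, one_pow]
  obtain ⟨ν, hν⟩ := arel_pow hrel N
  rw [hσN, hπN] at hν
  have hedge : ∀ i k, A i k ≠ ⊥ → (∑ t ∈ Finset.range N, p ((σ ^ t) i)) = ν k := by
    intro i k hik
    have h := hν i k
    simp only [Equiv.Perm.one_apply] at h
    obtain ⟨a, ha⟩ := WithBot.ne_bot_iff_exists.1 hik
    rw [← ha, ← WithBot.coe_add, ← WithBot.coe_add] at h
    have := WithBot.coe_inj.1 h
    linarith
  set C := ∑ t ∈ Finset.range N, p ((σ ^ t) ⟨0, hr⟩) with hC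
  have hconst : ∀ i, ∑ t ∈ Finset.range N, p ((σ ^ t) i) = C :=
    fun i => conn_const hconn hedge i ⟨0, hr⟩
  refine ⟨N, C, hNne, hσN, hconst, ?_⟩
  have h1 : ∑ i, ∑ t ∈ Finset.range N, p ((σ ^ t) i) = (r : ℝ) * C := by
    rw [Finset.sum_congr rfl fun i _ => hconst i, Finset.sum_const]
    simp [nsmul_eq_mul]
  have h2 : ∑ i, ∑ t ∈ Finset.range N, p ((σ ^ t) i) = (N : ℝ) * ∑ i, p i := by
    rw [Finset.sum_comm]
    rw [Finset.sum_congr rfl fun t _ => Equiv.sum_comp (σ ^ t) p, Finset.sum_const]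
    simp [nsmul_eq_mul]
  linarith


/-- If `A` is `r × c` of full rank with connected `B_A`, and
`P, Q ∈ G_A` both have `0` as an eigenvalue, then `PQ` has `0` as its unique eigenvalue. -/
theorem stmt_9 {r c : ℕ} (A : Fin r → Fin c → Trop)
    (hr : rowRank A = r) (hc : colRank A = c) (hconn : BConnected A)
    (P Q : Fin r → Fin r → Trop) (hP : P ∈ GA A) (hQ : Q ∈ GA A)
    (hP0 : IsEig P ((0 : ℝ) : Trop)) (hQ0 : IsEig Q ((0 : ℝ) : Trop)) :
    IsEig (tmul P Q) ((0 : ℝ) : Trop) ∧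
      ∀ mu : Trop, IsEig (tmul P Q) mu → mu = ((0 : ℝ) : Trop) := by
  rcases Nat.eq_zero_or_pos r with hr0 | hrpos
  · obtain ⟨v, hv, _⟩ := hP0
    exact absurd (funext fun i => absurd i.isLt (by omega)) hv
  obtain ⟨σP, p, hreprP⟩ := monomial_repr hP.1
  obtain ⟨σQ, q, hreprQ⟩ := monomial_repr hQ.1
  have hreprPQ := repr_mul hreprP hreprQ
  obtain ⟨μP, πP, hrelP⟩ := exists_arel hc hconn hrpos hP.2 hreprP
  obtain ⟨μQ, πQ, hrelQ⟩ := exists_arel hc hconn hrpos hQ.2 hreprQ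
  have hrelPQ := arel_comp hrelQ hrelP
  obtain ⟨NP, CP, hNPne, hσNP, hconstP, hsumP⟩ := package hconn hrpos hrelP
  obtain ⟨NQ, CQ, hNQne, hσNQ, hconstQ, hsumQ⟩ := package hconn hrpos hrelQ
  have hCP : CP = 0 := by
    have h := eig_unique hreprP hNPne hσNP hconstP _ hP0
    have h2 := WithBot.coe_inj.1 h
    have hNPpos : (0 : ℝ) < NP := by positivity
    field_simp at h2
    linarith
  have hCQ : CQ = 0 := by
    have h := eig_unique hreprQ hNQne hσNQ hconstQ _ hQ0
    have h2 := WithBot.coe_inj.1 h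
    have hNQpos : (0 : ℝ) < NQ := by positivity
    field_simp at h2
    linarith
  have hNPpos : (0 : ℝ) < NP := by positivity
  have hNQpos : (0 : ℝ) < NQ := by positivity
  have hrpos' : (0 : ℝ) < r := by positivity
  have hsum_p : ∑ i, p i = 0 := by
    rw [hCP, mul_zero] at hsumP
    rcases mul_eq_zero.1 hsumP.symm with h' | h'
    · linarith
    · exact h'
  have hsum_q : ∑ i, q i = 0 := by
    rw [hCQ, mul_zero] at hsumQ
    rcases mul_eq_zero.1 hsumQ.symm with h' | h'
    · linarith
    · exact h'
  obtain ⟨N, C, hNne, hσN, hconst, hsum⟩ := package hconn hrpos hrelPQ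
  have hC0 : C = 0 := by
    have hpq : ∑ i, (p i + q (σP i)) = 0 := by
      rw [Finset.sum_add_distrib, Equiv.sum_comp σP q, hsum_p, hsum_q, add_zero]
    rw [hpq, mul_zero] at hsum
    rcases mul_eq_zero.1 hsum with h' | h'
    · linarith
    · exact h'
  constructor
  · have h := eig_exists hrpos hreprPQ hNne hσN hconst
    rw [hC0, zero_div] at h
    exact h
  · intro mu hmu
    have h := eig_unique hreprPQ hNne hσN hconst mu hmu
    rw [hC0, zero_div] at h
    exact h
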